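/- For the induced ℂ××ℂ× action on T*ℂ⁴ given by (λ,μ)·(x,y,z,w) = (λx₀, λx₁, μy₀, μλ^{-n}y₁, λ⁻¹z₀, λ⁻¹z₁, μ⁻¹w₀, μ⁻¹λⁿw₁), the unstable locus is the union of the three linear subspaces {(x₀,x₁,0,0,z₀,z₁,w₀,w₁)}, {(0,0,y₀,y₁,z₀,z₁,w₀,0)}, and {(0,0,0,y₁,z₀,z₁,w₀,w₁)}. -/

import Mathlib

/-!
STATEMENT 11: For the induced `ℂ× × ℂ×`-action on `T*ℂ⁴ = ℂ⁸`,
`(λ,μ)·(x,y,z,w) = (λx₀, λx₁, μy₀, μλ^{-n}y₁, λ⁻¹z₀, λ⁻¹z₁, μ⁻¹w₀, μ⁻¹λⁿw₁)`,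
`ξ = (a,b)` acts by `√-1 diag(a,a,b,b-na,-a,-a,-b,na-b)`; with
`θ = (1/2)(c₀,c₁)`, `c₀,c₁ > 0`, the moment map along the flow is
`⟨μ(exp(√-1 tξ)v),ξ⟩ = -(1/2)∑ λ_k e^{-2λ_k t}|v_k|² + (1/2)(a c₀ + b c₁)`.
The unstable locus (points with some negative μ-weight, via Hilbert–Mumford)
is the union of the three linear subspaces
`{y₀ = y₁ = 0}`, `{x₀ = x₁ = w₁ = 0}`, `{x₀ = x₁ = y₀ = 0}`
(coordinates indexed `0:x₀,1:x₁,2:y₀,3:y₁,4:z₀,5:z₁,6:w₀,7:w₁`).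
-/

open Filter

namespace Stmt11

variable (n : ℕ) (c₀ c₁ : ℝ)

/-- The weights of the `ξ = (a,b)` action on the eight coordinates of `T*ℂ⁴`. -/
def wt (ξ : ℝ × ℝ) : Fin 8 → ℝ :=
  ![ξ.1, ξ.1, ξ.2, ξ.2 - n * ξ.1, -ξ.1, -ξ.1, -ξ.2, n * ξ.1 - ξ.2]

/-- `⟨μ(exp(√-1 t ξ) v), ξ⟩` for the action on `T*ℂ⁴`. -/
noncomputable def momentAlongFlow (ξ : ℝ × ℝ) (v : Fin 8 → ℂ) (t : ℝ) : ℝ :=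
  -(1/2 : ℝ) * ∑ k, wt n ξ k * Real.exp (-2 * wt n ξ k * t) * ‖v k‖ ^ 2
    + (1/2 : ℝ) * (ξ.1 * c₀ + ξ.2 * c₁)

/-- The μ-weight `w_μ^ξ(v)` in `EReal`. -/
noncomputable def weight (ξ : ℝ × ℝ) (v : Fin 8 → ℂ) : EReal :=
  Filter.limsup (fun t : ℝ => ((momentAlongFlow n c₀ c₁ ξ v t : ℝ) : EReal)) atTop

/-- Hilbert–Mumford semistability. -/
noncomputable def IsSemistable (v : Fin 8 → ℂ) : Prop :=
  ∀ ξ : ℝ × ℝ, ξ ≠ 0 → 0 ≤ weight n c₀ c₁ ξ v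

end Stmt11

namespace Stmt11Aux

open Stmt11

lemma wt0 (n : ℕ) (a b : ℝ) : wt n (a, b) 0 = a := rfl
lemma wt1 (n : ℕ) (a b : ℝ) : wt n (a, b) 1 = a := rfl
lemma wt2 (n : ℕ) (a b : ℝ) : wt n (a, b) 2 = b := rfl
lemma wt3 (n : ℕ) (a b : ℝ) : wt n (a, b) 3 = b - n * a := rfl
lemma wt7 (n : ℕ) (a b : ℝ) : wt n (a, b) 7 = n * a - b := rfl

lemma moment_tendsto (n : ℕ) (c₀ c₁ : ℝ) (ξ : ℝ × ℝ) (v : Fin 8 → ℂ)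
    (hv : ∀ k, wt n ξ k < 0 → v k = 0) :
    Tendsto (momentAlongFlow n c₀ c₁ ξ v) atTop
      (nhds ((1/2 : ℝ) * (ξ.1 * c₀ + ξ.2 * c₁))) := by
  have hsum : Tendsto
      (fun t => ∑ k, wt n ξ k * Real.exp (-2 * wt n ξ k * t) * ‖v k‖ ^ 2)
      atTop (nhds 0) := by
    have h : Tendsto
        (fun t => ∑ k : Fin 8, wt n ξ k * Real.exp (-2 * wt n ξ k * t) * ‖v k‖ ^ 2)
        atTop (nhds (∑ _k : Fin 8, (0 : ℝ))) := by
      apply tendsto_finset_sum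
      intro k _
      rcases lt_trichotomy (wt n ξ k) 0 with h | h | h
      · simp [hv k h]
      · simp [h]
      · have hlin : Tendsto (fun t : ℝ => -2 * wt n ξ k * t) atTop atBot :=
          (tendsto_const_mul_atBot_of_neg (by linarith)).2 tendsto_id
        have hexp : Tendsto (fun t : ℝ => Real.exp (-2 * wt n ξ k * t)) atTop (nhds 0) :=
          Real.tendsto_exp_atBot.comp hlin
        have := (hexp.const_mul (wt n ξ k)).mul_const (‖v k‖ ^ 2)
        simpa using this
    simpa using h
  have h2 := (hsum.const_mul (-(1/2 : ℝ))).add_const ((1/2 : ℝ) * (ξ.1 * c₀ + ξ.2 * c₁))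
  have h3 : -(1/2 : ℝ) * 0 + (1/2 : ℝ) * (ξ.1 * c₀ + ξ.2 * c₁)
      = (1/2 : ℝ) * (ξ.1 * c₀ + ξ.2 * c₁) := by ring
  rw [h3] at h2
  exact h2.congr fun t => rfl

lemma weight_eq (n : ℕ) (c₀ c₁ : ℝ) (ξ : ℝ × ℝ) (v : Fin 8 → ℂ)
    (hv : ∀ k, wt n ξ k < 0 → v k = 0) :
    weight n c₀ c₁ ξ v = (((1/2 : ℝ) * (ξ.1 * c₀ + ξ.2 * c₁) : ℝ) : EReal) := by
  have := (EReal.tendsto_coe (a := (1/2 : ℝ) * (ξ.1 * c₀ + ξ.2 * c₁))).2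
    (moment_tendsto n c₀ c₁ ξ v hv)
  exact this.limsup_eq

lemma term_le (w A t : ℝ) (hA : 0 ≤ A) (ht : 0 ≤ t) :
    w * Real.exp (-2 * w * t) * A ≤ |w| * A := by
  rcases le_or_gt 0 w with hw | hw
  · have hexp : Real.exp (-2 * w * t) ≤ 1 := Real.exp_le_one_iff.2 (by nlinarith)
    have : w * Real.exp (-2 * w * t) ≤ w := by nlinarith [Real.exp_pos (-2 * w * t)]
    calc w * Real.exp (-2 * w * t) * A ≤ w * A := by nlinarith
      _ ≤ |w| * A := by nlinarith [le_abs_self w]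
  · have h1 : 0 ≤ Real.exp (-2 * w * t) * A :=
      mul_nonneg (Real.exp_pos _).le hA
    nlinarith [abs_nonneg w, mul_nonneg (abs_nonneg w) hA]

lemma weight_top (n : ℕ) (c₀ c₁ : ℝ) (ξ : ℝ × ℝ) (v : Fin 8 → ℂ)
    (k : Fin 8) (hk : wt n ξ k < 0) (hvk : v k ≠ 0) :
    weight n c₀ c₁ ξ v = ⊤ := by
  set f : Fin 8 → ℝ → ℝ :=
    fun j t => wt n ξ j * Real.exp (-2 * wt n ξ j * t) * ‖v j‖ ^ 2 with hf
  set C : ℝ := ∑ j : Fin 8, |wt n ξ j| * ‖v j‖ ^ 2 with hC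
  have hA : 0 < ‖v k‖ ^ 2 := pow_pos (norm_pos_iff.mpr hvk) 2
  -- the bad term tends to atBot
  have hbad : Tendsto (fun t => f k t) atTop atBot := by
    have hlin : Tendsto (fun t : ℝ => -2 * wt n ξ k * t) atTop atTop :=
      (tendsto_const_mul_atTop_of_pos (by linarith)).2 tendsto_id
    have hexp : Tendsto (fun t : ℝ => Real.exp (-2 * wt n ξ k * t)) atTop atTop :=
      Real.tendsto_exp_atTop.comp hlin
    have hneg : wt n ξ k * ‖v k‖ ^ 2 < 0 := by nlinarith
    have := (tendsto_const_mul_atBot_of_neg hneg).2 hexp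
    apply this.congr
    intro t; simp [hf]; ring
  -- sum bounded by bad term plus constant
  have hbound : (fun t => ∑ j, f j t) ≤ᶠ[atTop] fun t => f k t + C := by
    filter_upwards [eventually_ge_atTop (0 : ℝ)] with t ht
    have h1 : ∑ j, f j t = f k t + ∑ j ∈ Finset.univ.erase k, f j t :=
      (Finset.add_sum_erase _ _ (Finset.mem_univ k)).symm
    have h2 : ∑ j ∈ Finset.univ.erase k, f j t ≤ C := by
      calc ∑ j ∈ Finset.univ.erase k, f j t
          ≤ ∑ j ∈ Finset.univ.erase k, |wt n ξ j| * ‖v j‖ ^ 2 := by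
            apply Finset.sum_le_sum
            intro j _
            exact term_le _ _ _ (by positivity) ht
        _ ≤ C := by
            apply Finset.sum_le_sum_of_subset_of_nonneg (Finset.erase_subset _ _)
            intro j _ _; positivity
    linarith [h1, h2]
  have hsum : Tendsto (fun t => ∑ j, f j t) atTop atBot :=
    tendsto_atBot_mono' _ hbound (tendsto_atBot_add_const_right _ C hbad)
  have hmom : Tendsto (momentAlongFlow n c₀ c₁ ξ v) atTop atTop := by
    have := tendsto_atTop_add_const_right atTop ((1/2 : ℝ) * (ξ.1 * c₀ + ξ.2 * c₁))
      ((tendsto_const_mul_atTop_of_neg (show -(1/2 : ℝ) < 0 by norm_num)).2 hsum)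
    exact this
  have htop : Tendsto (fun t : ℝ => ((momentAlongFlow n c₀ c₁ ξ v t : ℝ) : EReal)) atTop (nhds ⊤) := by
    rw [EReal.tendsto_nhds_top_iff_real]
    intro x
    filter_upwards [hmom.eventually_gt_atTop x] with t ht
    exact_mod_cast ht
  exact htop.limsup_eq

end Stmt11Aux

theorem statement11 (n : ℕ) (hn : 0 < n) (c₀ c₁ : ℝ) (hc₀ : 0 < c₀) (hc₁ : 0 < c₁) :
    { v : Fin 8 → ℂ | ¬ Stmt11.IsSemistable n c₀ c₁ v }
      = { v : Fin 8 → ℂ | v 2 = 0 ∧ v 3 = 0 }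
        ∪ { v : Fin 8 → ℂ | v 0 = 0 ∧ v 1 = 0 ∧ v 7 = 0 }
        ∪ { v : Fin 8 → ℂ | v 0 = 0 ∧ v 1 = 0 ∧ v 2 = 0 } := by
  have hn' : (0 : ℝ) < n := by exact_mod_cast hn
  ext v
  simp only [Set.mem_setOf_eq, Set.mem_union]
  constructor
  · intro huns
    rw [Stmt11.IsSemistable] at huns
    push_neg at huns
    obtain ⟨ξ, hξ0, hw⟩ := huns
    -- all negative-weight coordinates vanish
    have hv : ∀ k, Stmt11.wt n ξ k < 0 → v k = 0 := by
      intro k hk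
      by_contra hvk
      rw [Stmt11Aux.weight_top n c₀ c₁ ξ v k hk hvk] at hw
      exact absurd hw (by simp)
    have heq := Stmt11Aux.weight_eq n c₀ c₁ ξ v hv
    rw [heq] at hw
    have hlt : (1/2 : ℝ) * (ξ.1 * c₀ + ξ.2 * c₁) < 0 := by
      exact_mod_cast hw
    obtain ⟨a, b⟩ := ξ
    simp only at hlt hv
    have hab : a * c₀ + b * c₁ < 0 := by linarith
    rcases lt_trichotomy a 0 with ha | ha | ha
    · -- a < 0 : x₀ = x₁ = 0
      have h0 : v 0 = 0 := hv 0 (by rw [Stmt11Aux.wt0]; linarith)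
      have h1 : v 1 = 0 := hv 1 (by rw [Stmt11Aux.wt1]; linarith)
      rcases lt_or_ge b 0 with hb | hb
      · exact Or.inr ⟨h0, h1, hv 2 (by rw [Stmt11Aux.wt2]; linarith)⟩
      · refine Or.inl (Or.inr ⟨h0, h1, hv 7 ?_⟩)
        rw [Stmt11Aux.wt7]
        have : (n : ℝ) * a < 0 := mul_neg_of_pos_of_neg hn' ha
        linarith
    · -- a = 0 : b < 0
      subst ha
      have hb : b < 0 := by nlinarith
      exact Or.inl (Or.inl ⟨hv 2 (by rw [Stmt11Aux.wt2]; linarith),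
        hv 3 (by rw [Stmt11Aux.wt3]; simp; linarith)⟩)
    · -- a > 0 : b < 0
      have hb : b < 0 := by nlinarith
      have hna : (0 : ℝ) ≤ (n : ℝ) * a := by positivity
      exact Or.inl (Or.inl ⟨hv 2 (by rw [Stmt11Aux.wt2]; linarith),
        hv 3 (by rw [Stmt11Aux.wt3]; linarith)⟩)
  · intro h
    unfold Stmt11.IsSemistable
    push_neg
    rcases h with ((⟨h2, h3⟩ | ⟨h0, h1, h7⟩) | ⟨h0, h1, h2⟩)
    · refine ⟨(0, -1), by norm_num [Prod.ext_iff], ?_⟩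
      have hv : ∀ k, Stmt11.wt n (0, -1) k < 0 → v k = 0 := by
        intro k hk
        fin_cases k <;>
          first
            | exact h2
            | exact h3
            | (exfalso; revert hk; norm_num [Stmt11.wt])
            | (exfalso; revert hk; norm_num [Stmt11.wt]; positivity)
      rw [Stmt11Aux.weight_eq n c₀ c₁ _ v hv]
      have h : (1/2 : ℝ) * ((0 : ℝ) * c₀ + (-1) * c₁) < 0 := by nlinarith
      exact_mod_cast h
    · refine ⟨(-1, 0), by norm_num [Prod.ext_iff], ?_⟩
      have hv : ∀ k, Stmt11.wt n (-1, 0) k < 0 → v k = 0 := by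
        intro k hk
        fin_cases k <;>
          first
            | exact h0
            | exact h1
            | exact h7
            | (exfalso; revert hk; norm_num [Stmt11.wt])
            | (exfalso; revert hk; norm_num [Stmt11.wt]; positivity)
      rw [Stmt11Aux.weight_eq n c₀ c₁ _ v hv]
      have h : (1/2 : ℝ) * ((-1 : ℝ) * c₀ + 0 * c₁) < 0 := by nlinarith
      exact_mod_cast h
    · refine ⟨(-1, -(n : ℝ)), by norm_num [Prod.ext_iff], ?_⟩
      have hv : ∀ k, Stmt11.wt n (-1, -(n : ℝ)) k < 0 → v k = 0 := by
        intro k hk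
        fin_cases k <;>
          first
            | exact h0
            | exact h1
            | exact h2
            | (exfalso; revert hk; norm_num [Stmt11.wt])
            | (exfalso; revert hk; norm_num [Stmt11.wt]; positivity)
      rw [Stmt11Aux.weight_eq n c₀ c₁ _ v hv]
      have h : (1/2 : ℝ) * ((-1 : ℝ) * c₀ + (-(n : ℝ)) * c₁) < 0 := by nlinarith
      exact_mod_cast h
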